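/- arXiv:2010.12687 — 5 statements merged into one kernel-verified Lean document; each statement's English description precedes it below -/
import Mathlib

section
/- Let μ be a probability measure on ℝⁿ and x_1, …, x_N ∈ ℝⁿ, and let V be the N×N matrix with entries V(i,j) = μ({x ∈ ℝⁿ : x^k ≥ max(x_i^k, x_j^k) for all k}). Then V is positive semidefinite: for every l_1, …, l_N ∈ ℝ, ∑_{i=1}^N ∑_{j=1}^N l_i l_j V(i,j) ≥ 0. -/
open MeasureTheory

/-- The V-matrix `V i j = μ {x | ∀ k, x k ≥ max (xs i k) (xs j k)}`
built from a probability measure `μ` on `ℝⁿ` is positive semidefinite: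
`∑ i ∑ j, l i · l j · V i j ≥ 0` for all reals `l₁, …, l_N`. -/
theorem V_matrix_posSemidef (n N : ℕ) (μ : Measure (Fin n → ℝ))
    [IsProbabilityMeasure μ] (xs : Fin N → Fin n → ℝ) (l : Fin N → ℝ) :
    0 ≤ ∑ i : Fin N, ∑ j : Fin N,
          l i * l j * (μ {x : Fin n → ℝ | ∀ k, max (xs i k) (xs j k) ≤ x k}).toReal := by
  set A : Fin N → Set (Fin n → ℝ) := fun i => {x | ∀ k, xs i k ≤ x k} with hAdef
  have hA : ∀ i, MeasurableSet (A i) := by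
    intro i
    have : A i = ⋂ k, (fun x : Fin n → ℝ => x k) ⁻¹' Set.Ici (xs i k) := by
      ext x; simp [hAdef]
    rw [this]
    exact MeasurableSet.iInter fun k => (measurable_pi_apply k) measurableSet_Ici
  set f : Fin N → (Fin n → ℝ) → ℝ := fun i => (A i).indicator (fun _ => l i) with hfdef
  have hprod : ∀ i j x, f i x * f j x = (A i ∩ A j).indicator (fun _ => l i * l j) x := by
    intro i j x
    simp only [hfdef, Set.indicator, Set.mem_inter_iff]
    by_cases hi : x ∈ A i <;> by_cases hj : x ∈ A j <;> simp [hi, hj]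
  have hintprod : ∀ i j, Integrable (fun x => f i x * f j x) μ := by
    intro i j
    simp only [hprod i j]
    exact (integrable_const _).indicator ((hA i).inter (hA j))
  have key : ∀ i j, l i * l j *
      (μ {x : Fin n → ℝ | ∀ k, max (xs i k) (xs j k) ≤ x k}).toReal
      = ∫ x, f i x * f j x ∂μ := by
    intro i j
    have hset : {x : Fin n → ℝ | ∀ k, max (xs i k) (xs j k) ≤ x k} = A i ∩ A j := by
      ext x
      simp only [Set.mem_setOf_eq, Set.mem_inter_iff, hAdef, max_le_iff]
      exact ⟨fun h => ⟨fun k => (h k).1, fun k => (h k).2⟩, fun h k => ⟨h.1 k, h.2 k⟩⟩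
    rw [hset]
    simp only [hprod i j]
    rw [integral_indicator_const _ ((hA i).inter (hA j))]
    simp [mul_comm]
    exact Or.inl rfl
  calc 0 ≤ ∫ x, (∑ i, f i x) ^ 2 ∂μ :=
        integral_nonneg fun x => sq_nonneg _
    _ = ∑ i, ∑ j, l i * l j *
          (μ {x : Fin n → ℝ | ∀ k, max (xs i k) (xs j k) ≤ x k}).toReal := by
        simp only [key, sq, Finset.sum_mul_sum]
        rw [integral_finset_sum _ fun i _ =>
          integrable_finset_sum _ fun j _ => hintprod i j]
        exact Finset.sum_congr rfl fun i _ =>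
          integral_finset_sum _ fun j _ => hintprod i j
end

section
/- Let ν be a probability measure on ℝ with ν({x}) = 0 for every x ∈ ℝ (i.e., with continuous cumulative distribution function). Let M ≥ 1, x_1, …, x_N ∈ ℝ, and l_1, …, l_N ∈ ℝ. Define V(i,j) = ν([max(x_i, x_j), ∞)), and for a sample t = (t_1, …, t_M) ∈ ℝ^M define V̂_t(i,j) = (1/M) ∑_{q=1}^M 1{t_q ≥ max(x_i, x_j)}, and for an N×N matrix W define ρ²(W) = (1/N²) ∑_{i,j=1}^N l_i l_j W(i,j). Then ν^⊗M({t ∈ ℝ^M : |ρ²(V) − ρ²(V̂_t)| ≤ √(log M / M) · (1/N²) ∑_{i,j=1}^N |l_i l_j|}) ≥ 1 − 2/M². -/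
open MeasureTheory
open scoped ENNReal
open ProbabilityTheory

lemma aux_b {p u : ℝ} (hp0 : 0 ≤ p) (hp1 : p ≤ 1) (hu : 0 ≤ u) :
    (1 - p) + p * Real.exp u ≤ Real.exp (p * u + u ^ 2 / 8) := by
  have hD : ∀ v : ℝ, 0 < (1 - p) + p * Real.exp v := by
    intro v
    rcases eq_or_lt_of_le hp0 with h | h
    · simp [← h]
    · have := Real.exp_pos v
      nlinarith
  set G : ℝ → ℝ := fun v => p + v / 4 - p * Real.exp v / ((1 - p) + p * Real.exp v) with hGdef
  have hDena : ∀ v : ℝ, HasDerivAt (fun w => (1 - p) + p * Real.exp w) (p * Real.exp v) v :=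
    fun v => ((Real.hasDerivAt_exp v).const_mul p).const_add (1 - p)
  have hGderiv : ∀ v : ℝ, HasDerivAt G
      (1 / 4 - (p * Real.exp v * ((1 - p) + p * Real.exp v) -
        p * Real.exp v * (p * Real.exp v)) / ((1 - p) + p * Real.exp v) ^ 2) v := by
    intro v
    have h1 : HasDerivAt (fun w : ℝ => p + w / 4) (1 / 4) v := by
      simpa using ((hasDerivAt_id v).div_const 4).const_add p
    have h2 : HasDerivAt (fun w => p * Real.exp w / ((1 - p) + p * Real.exp w))
        ((p * Real.exp v * ((1 - p) + p * Real.exp v) -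
          p * Real.exp v * (p * Real.exp v)) / ((1 - p) + p * Real.exp v) ^ 2) v :=
      ((Real.hasDerivAt_exp v).const_mul p).div (hDena v) (hD v).ne'
    exact h1.sub h2
  have hG'nonneg : ∀ v : ℝ, 0 ≤ 1 / 4 - (p * Real.exp v * ((1 - p) + p * Real.exp v) -
      p * Real.exp v * (p * Real.exp v)) / ((1 - p) + p * Real.exp v) ^ 2 := by
    intro v
    rw [sub_nonneg, div_le_iff₀ (pow_pos (hD v) 2)]
    nlinarith [sq_nonneg ((1 - p) - p * Real.exp v), Real.exp_pos v, hD v]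
  have hGmono : Monotone G := by
    refine monotone_of_deriv_nonneg (fun v => (hGderiv v).differentiableAt) (fun v => ?_)
    rw [(hGderiv v).deriv]
    exact hG'nonneg v
  have hG0 : G 0 = 0 := by simp [hGdef]
  have hGnonneg : ∀ v : ℝ, 0 ≤ v → 0 ≤ G v := fun v hv => hG0 ▸ hGmono hv
  -- now F
  set F : ℝ → ℝ := fun v => p * v + v ^ 2 / 8 - Real.log ((1 - p) + p * Real.exp v) with hFdef
  have hFderiv : ∀ v : ℝ, HasDerivAt F (G v) v := by
    intro v
    have h1 : HasDerivAt (fun w : ℝ => p * w + w ^ 2 / 8) (p + 2 * v / 8) v := by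
      have := ((hasDerivAt_pow 2 v).div_const 8).const_add (p * v)
      have h2 : HasDerivAt (fun w : ℝ => p * w) p v := by
        simpa using (hasDerivAt_id v).const_mul p
      have := h2.add ((hasDerivAt_pow 2 v).div_const 8)
      exact this.congr_deriv (by norm_num)
    have h3 : HasDerivAt (fun w => Real.log ((1 - p) + p * Real.exp w))
        (p * Real.exp v / ((1 - p) + p * Real.exp v)) v := (hDena v).log (hD v).ne'
    have := h1.sub h3
    exact this.congr_deriv (by simp only [hGdef]; ring)
  have hFmono : MonotoneOn F (Set.Ici 0) := by
    refine monotoneOn_of_deriv_nonneg (convex_Ici 0)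
      (fun v _ => ((hFderiv v).differentiableAt.continuousAt.continuousWithinAt)) ?_ ?_
    · intro v hv
      exact ((hFderiv v).differentiableAt).differentiableWithinAt
    · intro v hv
      rw [(hFderiv v).deriv]
      rw [interior_Ici] at hv
      exact hGnonneg v (le_of_lt hv)
  have hF0 : F 0 = 0 := by simp [hFdef]
  have hFu : 0 ≤ F u := hF0 ▸ hFmono Set.self_mem_Ici hu hu
  have hlog : Real.log ((1 - p) + p * Real.exp u) ≤ p * u + u ^ 2 / 8 := by
    simp only [hFdef] at hFu; linarith
  calc (1 - p) + p * Real.exp u = Real.exp (Real.log ((1 - p) + p * Real.exp u)) :=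
        (Real.exp_log (hD u)).symm
    _ ≤ Real.exp (p * u + u ^ 2 / 8) := Real.exp_le_exp.mpr hlog

lemma aux_mgf (ν : Measure ℝ) [IsProbabilityMeasure ν] {h : ℝ → ℝ} (hm : Measurable h)
    {L : ℝ} (h0 : ∀ x, 0 ≤ h x) (hL : ∀ x, h x ≤ L) {s : ℝ} (hs : 0 ≤ s) :
    ∫ x, Real.exp (s * h x) ∂ν ≤ Real.exp (s * (∫ x, h x ∂ν) + s ^ 2 * L ^ 2 / 8) := by
  rcases le_or_gt L 0 with hL0 | hL0
  · -- h ≡ 0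
    have hzero : ∀ x, h x = 0 := fun x => le_antisymm ((hL x).trans hL0) (h0 x)
    simp only [funext hzero]
    simp only [mul_zero, Real.exp_zero, integral_const, measure_univ, ENNReal.toReal_one,
      smul_eq_mul, mul_one, mul_zero, zero_add]
    rw [probReal_univ]
    exact Real.one_le_exp (by positivity)
  · have hLne : L ≠ 0 := hL0.ne'
    have hint_h : Integrable h ν := by
      refine (integrable_const L).mono' hm.aestronglyMeasurable (ae_of_all _ fun x => ?_)
      rw [Real.norm_eq_abs, abs_of_nonneg (h0 x)]; exact hL x
    set μ := ∫ x, h x ∂ν with hμ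
    have hμ0 : 0 ≤ μ := integral_nonneg h0
    have hμL : μ ≤ L := by
      calc μ ≤ ∫ _, L ∂ν := integral_mono hint_h (integrable_const L) hL
        _ = L := by simp
    have hpt : ∀ x, Real.exp (s * h x) ≤ (1 - h x / L) + (h x / L) * Real.exp (s * L) := by
      intro x
      have ha : (0:ℝ) ≤ 1 - h x / L := by
        rw [sub_nonneg, div_le_one hL0]; exact hL x
      have hb : (0:ℝ) ≤ h x / L := div_nonneg (h0 x) hL0.le
      have hab : (1 - h x / L) + h x / L = 1 := by ring
      have := convexOn_exp.2 (Set.mem_univ (0:ℝ)) (Set.mem_univ (s * L)) ha hb hab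
      simp only [smul_eq_mul, mul_zero, zero_add, Real.exp_zero, mul_one] at this
      have harg : h x / L * (s * L) = s * h x := by field_simp
      rw [harg] at this
      linarith
    have hint1 : Integrable (fun x => Real.exp (s * h x)) ν := by
      refine (integrable_const (Real.exp (s * L))).mono'
        ((hm.const_mul s).exp).aestronglyMeasurable (ae_of_all _ fun x => ?_)
      rw [Real.norm_eq_abs, abs_of_nonneg (Real.exp_pos _).le]
      exact Real.exp_le_exp.mpr (mul_le_mul_of_nonneg_left (hL x) hs)
    have hint2 : Integrable (fun x => (1 - h x / L) + (h x / L) * Real.exp (s * L)) ν :=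
      ((integrable_const 1).sub (hint_h.div_const L)).add
        ((hint_h.div_const L).mul_const _)
    calc ∫ x, Real.exp (s * h x) ∂ν
        ≤ ∫ x, ((1 - h x / L) + (h x / L) * Real.exp (s * L)) ∂ν :=
          integral_mono hint1 hint2 hpt
      _ = (1 - μ / L) + (μ / L) * Real.exp (s * L) := by
          have hA : Integrable (fun x => 1 - h x / L) ν :=
            (integrable_const 1).sub (hint_h.div_const L)
          have hB : Integrable (fun x => (h x / L) * Real.exp (s * L)) ν :=
            (hint_h.div_const L).mul_const _
          have hC : Integrable (fun x => h x / L) ν := hint_h.div_const L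
          rw [integral_add hA hB, integral_sub (integrable_const 1) hC,
            MeasureTheory.integral_mul_const, integral_div]
          simp [hμ]
      _ ≤ Real.exp ((μ / L) * (s * L) + (s * L) ^ 2 / 8) :=
          aux_b (div_nonneg hμ0 hL0.le) ((div_le_one hL0).mpr hμL)
            (mul_nonneg hs hL0.le)
      _ = Real.exp (s * μ + s ^ 2 * L ^ 2 / 8) := by
          congr 1; field_simp

lemma aux_pi_pow (M : ℕ) (ν : Measure ℝ) [IsProbabilityMeasure ν] (f : ℝ → ℝ) :
    ∫ t : Fin M → ℝ, ∏ q, f (t q) ∂(Measure.pi fun _ => ν) = (∫ x, f x ∂ν) ^ M := by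
  have := MeasureTheory.integral_fintype_prod_eq_pow (ι := Fin M) (μ := ν) f
  simpa [Fintype.card_fin] using this

lemma aux_tail (M : ℕ) (hM : 0 < M) (ν : Measure ℝ) [IsProbabilityMeasure ν]
    {h : ℝ → ℝ} (hm : Measurable h) {L : ℝ} (h0 : ∀ x, 0 ≤ h x) (hL : ∀ x, h x ≤ L)
    (hL0 : 0 < L) {a : ℝ} (ha : 0 < a) :
    ((Measure.pi fun _ : Fin M => ν)
        {t | (M : ℝ) * (∫ x, h x ∂ν) + a ≤ ∑ q, h (t q)}).toReal
      ≤ Real.exp (-(2 * a ^ 2 / (M * L ^ 2))) := by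
  set pm := Measure.pi fun _ : Fin M => ν with hpm
  set X : (Fin M → ℝ) → ℝ := fun t => ∑ q, h (t q) with hX
  set s : ℝ := 4 * a / (M * L ^ 2) with hs
  have hspos : 0 < s := by positivity
  have hXmeas : Measurable X := Finset.measurable_sum _ fun q _ => hm.comp (measurable_pi_apply q)
  have hint : Integrable (fun t => Real.exp (s * X t)) pm := by
    refine (integrable_const (Real.exp (s * (M * L)))).mono'
      ((hXmeas.const_mul s).exp).aestronglyMeasurable (ae_of_all _ fun t => ?_)
    rw [Real.norm_eq_abs, abs_of_nonneg (Real.exp_pos _).le]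
    refine Real.exp_le_exp.mpr (mul_le_mul_of_nonneg_left ?_ hspos.le)
    calc X t ≤ ∑ q : Fin M, L := Finset.sum_le_sum fun q _ => hL _
      _ = M * L := by simp [mul_comm]
  have hch := measure_ge_le_exp_mul_mgf (X := X) (μ := pm)
    ((M : ℝ) * (∫ x, h x ∂ν) + a) hspos.le hint
  have hmgf : mgf X pm s = (∫ x, Real.exp (s * h x) ∂ν) ^ M := by
    rw [mgf]
    rw [← aux_pi_pow M ν (fun x => Real.exp (s * h x))]
    congr 1
    ext t
    simp only [← Real.exp_sum, hX, Finset.mul_sum]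
  have hbase0 : 0 ≤ ∫ x, Real.exp (s * h x) ∂ν := integral_nonneg fun x => (Real.exp_pos _).le
  have hmgf_le : mgf X pm s ≤ Real.exp (M * (s * (∫ x, h x ∂ν) + s ^ 2 * L ^ 2 / 8)) := by
    rw [hmgf]
    calc (∫ x, Real.exp (s * h x) ∂ν) ^ M
        ≤ (Real.exp (s * (∫ x, h x ∂ν) + s ^ 2 * L ^ 2 / 8)) ^ M :=
          pow_le_pow_left₀ hbase0 (aux_mgf ν hm h0 hL hspos.le) M
      _ = Real.exp (M * (s * (∫ x, h x ∂ν) + s ^ 2 * L ^ 2 / 8)) := by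
          rw [← Real.exp_nat_mul]
  calc (pm {t | (M : ℝ) * (∫ x, h x ∂ν) + a ≤ X t}).toReal
      ≤ Real.exp (-s * ((M : ℝ) * (∫ x, h x ∂ν) + a)) * mgf X pm s := hch
    _ ≤ Real.exp (-s * ((M : ℝ) * (∫ x, h x ∂ν) + a)) *
        Real.exp (M * (s * (∫ x, h x ∂ν) + s ^ 2 * L ^ 2 / 8)) := by
        exact mul_le_mul_of_nonneg_left hmgf_le (Real.exp_pos _).le
    _ = Real.exp (-(s * a) + M * s ^ 2 * L ^ 2 / 8) := by
        rw [← Real.exp_add]; congr 1; ring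
    _ = Real.exp (-(2 * a ^ 2 / (M * L ^ 2))) := by
        congr 1
        rw [hs]
        have hMpos : (0:ℝ) < M := Nat.cast_pos.mpr hM
        field_simp
        ring

lemma aux_two (M : ℕ) (hM : 0 < M) (ν : Measure ℝ) [IsProbabilityMeasure ν]
    {h : ℝ → ℝ} (hm : Measurable h) {L : ℝ} (h0 : ∀ x, 0 ≤ h x) (hL : ∀ x, h x ≤ L)
    (hL0 : 0 < L) {a : ℝ} (ha : 0 < a) :
    (Measure.pi fun _ : Fin M => ν)
        {t | a < |(∑ q, h (t q)) - (M : ℝ) * (∫ x, h x ∂ν)|}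
      ≤ ENNReal.ofReal (Real.exp (-(2 * a ^ 2 / (M * L ^ 2))))
        + ENNReal.ofReal (Real.exp (-(2 * a ^ 2 / (M * L ^ 2)))) := by
  set pm := Measure.pi fun _ : Fin M => ν with hpm
  set μ := ∫ x, h x ∂ν with hμ
  have hint_h : Integrable h ν := by
    refine (integrable_const L).mono' hm.aestronglyMeasurable (ae_of_all _ fun x => ?_)
    rw [Real.norm_eq_abs, abs_of_nonneg (h0 x)]; exact hL x
  have hμ' : ∫ x, (L - h x) ∂ν = L - μ := by
    rw [integral_sub (integrable_const L) hint_h]; simp [hμ]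
  have hsub : {t : Fin M → ℝ | a < |(∑ q, h (t q)) - (M : ℝ) * μ|}
      ⊆ {t | (M : ℝ) * μ + a ≤ ∑ q, h (t q)}
        ∪ {t | (M : ℝ) * (∫ x, (L - h x) ∂ν) + a ≤ ∑ q, (L - h (t q))} := by
    intro t ht
    simp only [Set.mem_setOf_eq] at ht
    rcases lt_or_ge ((∑ q, h (t q)) - (M : ℝ) * μ) 0 with hneg | hpos
    · right
      rw [abs_of_neg hneg] at ht
      simp only [Set.mem_setOf_eq, hμ', Finset.sum_sub_distrib, Finset.sum_const,
        Finset.card_univ, Fintype.card_fin, nsmul_eq_mul]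
      linarith
    · left
      rw [abs_of_nonneg hpos] at ht
      simp only [Set.mem_setOf_eq]
      linarith
  calc pm {t | a < |(∑ q, h (t q)) - (M : ℝ) * μ|}
      ≤ pm ({t | (M : ℝ) * μ + a ≤ ∑ q, h (t q)}
          ∪ {t | (M : ℝ) * (∫ x, (L - h x) ∂ν) + a ≤ ∑ q, (L - h (t q))}) :=
        measure_mono hsub
    _ ≤ pm {t | (M : ℝ) * μ + a ≤ ∑ q, h (t q)}
        + pm {t | (M : ℝ) * (∫ x, (L - h x) ∂ν) + a ≤ ∑ q, (L - h (t q))} :=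
        measure_union_le _ _
    _ ≤ _ := by
        gcongr
        · rw [← ENNReal.ofReal_toReal (measure_ne_top pm _)]
          exact ENNReal.ofReal_le_ofReal (aux_tail M hM ν hm h0 hL hL0 ha)
        · rw [← ENNReal.ofReal_toReal (measure_ne_top pm _)]
          refine ENNReal.ofReal_le_ofReal
            (aux_tail M hM ν (h := fun x => L - h x) ((measurable_const.sub hm))
              (fun x => show (0:ℝ) ≤ L - h x by linarith [hL x]) (fun x => show L - h x ≤ L by linarith [h0 x]) hL0 ha)

/-- Let `ν` be an atomless (continuous CDF) probability measure on `ℝ`,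
`M ≥ 1`, `x₁, …, x_N ∈ ℝ`, `l₁, …, l_N ∈ ℝ`. With `V i j = ν [max (xs i) (xs j), ∞)`,
`V̂_t i j = (1/M) ∑ q, 1{t q ≥ max (xs i) (xs j)}` and
`ρ²(W) = (1/N²) ∑ i ∑ j, l i · l j · W i j`, the probability under `ν^⊗M` that
`|ρ²(V) − ρ²(V̂_t)| ≤ √(log M / M) · (1/N²) ∑ᵢⱼ |lᵢ lⱼ|` is at least `1 − 2/M²`. -/
theorem rho_sq_concentration_one_dim (N M : ℕ) (hM : 1 ≤ M)
    (ν : Measure ℝ) [IsProbabilityMeasure ν] (hcont : ∀ x : ℝ, ν {x} = 0)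
    (xs : Fin N → ℝ) (l : Fin N → ℝ) :
    (1 : ℝ≥0∞) - 2 / (M : ℝ≥0∞) ^ 2
      ≤ Measure.pi (fun _ : Fin M => ν)
          {t : Fin M → ℝ |
            |((1 / (N : ℝ) ^ 2) * ∑ i : Fin N, ∑ j : Fin N,
                l i * l j * (ν (Set.Ici (max (xs i) (xs j)))).toReal)
              - ((1 / (N : ℝ) ^ 2) * ∑ i : Fin N, ∑ j : Fin N,
                l i * l j * ((1 / (M : ℝ)) * ∑ q : Fin M,
                  (if max (xs i) (xs j) ≤ t q then (1:ℝ) else 0)))|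
            ≤ Real.sqrt (Real.log M / M)
                * ((1 / (N : ℝ) ^ 2) * ∑ i : Fin N, ∑ j : Fin N, |l i * l j|)} := by
  set pm := Measure.pi fun _ : Fin M => ν with hpm
  set L : ℝ := ∑ i : Fin N, ∑ j : Fin N, |l i * l j| with hLdef
  set ε : ℝ := Real.sqrt (Real.log M / M) with hεdef
  set c : ℝ := 1 / (N : ℝ) ^ 2 with hcdef
  have hc0 : 0 ≤ c := by positivity
  -- trivial case M = 1
  rcases eq_or_lt_of_le hM with hM1 | hM2
  · subst hM1
    have h10 : (1 : ℝ≥0∞) - 2 / ((1 : ℕ) : ℝ≥0∞) ^ 2 = 0 := by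
      rw [Nat.cast_one, one_pow, div_one]
      exact tsub_eq_zero_of_le one_le_two
    exact le_trans h10.le zero_le
  have hM2' : 2 ≤ M := hM2
  have hMpos : (0:ℝ) < M := by positivity
  have hMne : (M:ℝ) ≠ 0 := hMpos.ne'
  -- trivial case L = 0
  rcases eq_or_lt_of_le (Finset.sum_nonneg fun i _ =>
      Finset.sum_nonneg fun j _ => abs_nonneg (l i * l j) : (0:ℝ) ≤ L) with hL0 | hLpos
  · have hzero : ∀ i j : Fin N, l i * l j = 0 := by
      intro i j
      have h1 := (Finset.sum_eq_zero_iff_of_nonneg fun i _ =>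
        Finset.sum_nonneg fun j _ => abs_nonneg (l i * l j)).mp hL0.symm i (Finset.mem_univ i)
      have h2 := (Finset.sum_eq_zero_iff_of_nonneg fun j _ =>
        abs_nonneg (l i * l j)).mp h1 j (Finset.mem_univ j)
      exact abs_eq_zero.mp h2
    have huniv : {t : Fin M → ℝ |
        |(c * ∑ i : Fin N, ∑ j : Fin N,
            l i * l j * (ν (Set.Ici (max (xs i) (xs j)))).toReal)
          - (c * ∑ i : Fin N, ∑ j : Fin N,
            l i * l j * ((1 / (M : ℝ)) * ∑ q : Fin M,
              (if max (xs i) (xs j) ≤ t q then (1:ℝ) else 0)))|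
        ≤ ε * (c * L)} = Set.univ := by
      ext t
      simp only [Set.mem_setOf_eq, Set.mem_univ, iff_true]
      have e1 : ∀ (f : Fin N → Fin N → ℝ),
          ∑ i : Fin N, ∑ j : Fin N, l i * l j * f i j = 0 := fun f =>
        Finset.sum_eq_zero fun i _ => Finset.sum_eq_zero fun j _ => by
          rw [hzero i j, zero_mul]
      have hLz : L = 0 := by rw [hLdef, ← hL0]
      rw [e1, e1, hLz]
      simp
    rw [huniv]
    simp only [measure_univ]
    exact tsub_le_self
  -- main case
  have hLne : L ≠ 0 := hLpos.ne'
  have hεpos : 0 < ε := Real.sqrt_pos.mpr (by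
    apply div_pos (Real.log_pos (by exact_mod_cast hM2')) hMpos)
  set a : ℝ := ε * ((M:ℝ) * L) with hadef
  have ha : 0 < a := by
    rw [hadef]
    exact mul_pos hεpos (mul_pos hMpos hLpos)
  set h : ℝ → ℝ := fun x => ∑ i : Fin N, ∑ j : Fin N,
    l i * l j * (if max (xs i) (xs j) ≤ x then (1:ℝ) else 0) with hhdef
  have hindprod : ∀ (i j : Fin N) (x : ℝ),
      (if max (xs i) (xs j) ≤ x then (1:ℝ) else 0)
        = (if xs i ≤ x then (1:ℝ) else 0) * (if xs j ≤ x then (1:ℝ) else 0) := by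
    intro i j x
    by_cases h1 : xs i ≤ x <;> by_cases h2 : xs j ≤ x <;> simp [max_le_iff, h1, h2]
  have h0 : ∀ x, 0 ≤ h x := by
    intro x
    have hsq : h x = (∑ i : Fin N, l i * (if xs i ≤ x then (1:ℝ) else 0)) ^ 2 := by
      rw [sq, Finset.sum_mul_sum]
      refine Finset.sum_congr rfl fun i _ => Finset.sum_congr rfl fun j _ => ?_
      rw [hindprod]; ring
    rw [hsq]; positivity
  have hub : ∀ x, h x ≤ L := by
    intro x
    refine Finset.sum_le_sum fun i _ => Finset.sum_le_sum fun j _ => ?_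
    by_cases hij : max (xs i) (xs j) ≤ x
    · simp only [hij, if_true, mul_one]; exact le_abs_self _
    · simp only [hij, if_false, mul_zero]; exact abs_nonneg _
  have hmeas : Measurable h := by
    refine Finset.measurable_sum _ fun i _ => Finset.measurable_sum _ fun j _ => ?_
    exact (Measurable.ite measurableSet_Ici measurable_const measurable_const).const_mul _
  -- integral of h
  have hgind : ∀ z : ℝ, (fun x => if z ≤ x then (1:ℝ) else 0)
      = (Set.Ici z).indicator (fun _ => (1:ℝ)) := by
    intro z; ext x; simp [Set.indicator_apply, Set.mem_Ici]
  have hgval : ∀ z : ℝ, ∫ x, (if z ≤ x then (1:ℝ) else 0) ∂ν = (ν (Set.Ici z)).toReal := by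
    intro z
    rw [hgind z, integral_indicator_const (1:ℝ) measurableSet_Ici, smul_eq_mul, mul_one, measureReal_def]
  have hgint : ∀ z : ℝ, Integrable (fun x => if z ≤ x then (1:ℝ) else 0) ν := by
    intro z
    rw [hgind z]
    exact (integrable_const (1:ℝ)).indicator measurableSet_Ici
  set μ : ℝ := ∑ i : Fin N, ∑ j : Fin N,
    l i * l j * (ν (Set.Ici (max (xs i) (xs j)))).toReal with hμdef
  have hμeq : ∫ x, h x ∂ν = μ := by
    rw [hhdef]
    rw [integral_finset_sum _ fun i _ => integrable_finset_sum _ fun j _ =>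
      ((hgint _).const_mul _)]
    refine Finset.sum_congr rfl fun i _ => ?_
    rw [integral_finset_sum _ fun j _ => ((hgint _).const_mul _)]
    refine Finset.sum_congr rfl fun j _ => ?_
    rw [MeasureTheory.integral_const_mul, hgval]
  -- rewriting the empirical sum
  have hSb : ∀ t : Fin M → ℝ,
      ∑ i : Fin N, ∑ j : Fin N, l i * l j * ((1 / (M : ℝ)) * ∑ q : Fin M,
          (if max (xs i) (xs j) ≤ t q then (1:ℝ) else 0))
        = (1 / (M:ℝ)) * ∑ q : Fin M, h (t q) := by
    intro t
    calc ∑ i : Fin N, ∑ j : Fin N, l i * l j * ((1 / (M : ℝ)) * ∑ q : Fin M,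
            (if max (xs i) (xs j) ≤ t q then (1:ℝ) else 0))
        = ∑ i : Fin N, ∑ j : Fin N, ∑ q : Fin M, (1 / (M:ℝ)) *
            (l i * l j * (if max (xs i) (xs j) ≤ t q then (1:ℝ) else 0)) := by
          refine Finset.sum_congr rfl fun i _ => Finset.sum_congr rfl fun j _ => ?_
          rw [Finset.mul_sum, Finset.mul_sum]
          exact Finset.sum_congr rfl fun q _ => by ring
      _ = ∑ i : Fin N, ∑ q : Fin M, ∑ j : Fin N, (1 / (M:ℝ)) *
            (l i * l j * (if max (xs i) (xs j) ≤ t q then (1:ℝ) else 0)) := by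
          exact Finset.sum_congr rfl fun i _ => Finset.sum_comm
      _ = ∑ q : Fin M, ∑ i : Fin N, ∑ j : Fin N, (1 / (M:ℝ)) *
            (l i * l j * (if max (xs i) (xs j) ≤ t q then (1:ℝ) else 0)) :=
          Finset.sum_comm
      _ = (1 / (M:ℝ)) * ∑ q : Fin M, h (t q) := by
          rw [Finset.mul_sum]
          refine Finset.sum_congr rfl fun q _ => ?_
          rw [hhdef]
          simp only [Finset.mul_sum]
  -- the good event
  set G : Set (Fin M → ℝ) := {t | |(∑ q : Fin M, h (t q)) - (M:ℝ) * μ| ≤ a} with hGdef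
  have hGmeas : MeasurableSet G := by
    have hXm : Measurable fun t : Fin M → ℝ => |(∑ q : Fin M, h (t q)) - (M:ℝ) * μ| :=
      ((Finset.measurable_sum _ fun q _ =>
        hmeas.comp (measurable_pi_apply q)).sub measurable_const).abs
    exact measurableSet_le hXm measurable_const
  have hsubset : G ⊆ {t : Fin M → ℝ |
      |(c * ∑ i : Fin N, ∑ j : Fin N,
          l i * l j * (ν (Set.Ici (max (xs i) (xs j)))).toReal)
        - (c * ∑ i : Fin N, ∑ j : Fin N,
          l i * l j * ((1 / (M : ℝ)) * ∑ q : Fin M,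
            (if max (xs i) (xs j) ≤ t q then (1:ℝ) else 0)))|
      ≤ ε * (c * L)} := by
    intro t ht
    simp only [hGdef, Set.mem_setOf_eq] at ht
    simp only [Set.mem_setOf_eq]
    rw [hSb t, ← hμdef]
    have he1 : c * μ - c * ((1 / (M:ℝ)) * ∑ q : Fin M, h (t q))
        = (c * (1 / (M:ℝ))) * ((M:ℝ) * μ - ∑ q : Fin M, h (t q)) := by
      field_simp
    rw [he1, abs_mul, abs_of_nonneg (by positivity : (0:ℝ) ≤ c * (1 / (M:ℝ)))]
    rw [abs_sub_comm]
    calc c * (1 / (M:ℝ)) * |(∑ q : Fin M, h (t q)) - (M:ℝ) * μ|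
        ≤ c * (1 / (M:ℝ)) * a := by
          exact mul_le_mul_of_nonneg_left ht (by positivity)
      _ = ε * (c * L) := by rw [hadef]; field_simp
  -- probability bound
  have hbound : pm Gᶜ ≤ 2 / (M : ℝ≥0∞) ^ 2 := by
    have hGc : Gᶜ = {t : Fin M → ℝ | a < |(∑ q : Fin M, h (t q)) - (M:ℝ) * (∫ x, h x ∂ν)|} := by
      rw [hμeq]
      ext t
      simp [hGdef, not_le]
    rw [hGc]
    have h2 := aux_two M (by omega) ν hmeas h0 hub hLpos ha
    refine h2.trans ?_
    have hε2 : ε ^ 2 = Real.log M / M :=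
      Real.sq_sqrt (div_nonneg (Real.log_nonneg (by exact_mod_cast hM)) (Nat.cast_nonneg M))
    have ha2 : -(2 * a ^ 2 / ((M:ℝ) * L ^ 2)) = -(2 * Real.log M) := by
      rw [hadef, mul_pow, mul_pow, hε2]
      field_simp
    have hexp : Real.exp (-(2 * a ^ 2 / ((M:ℝ) * L ^ 2))) = 1 / (M:ℝ) ^ 2 := by
      rw [ha2, show -(2 * Real.log (M:ℝ)) = -Real.log ((M:ℝ) ^ 2) by
        rw [Real.log_pow]; push_cast; ring]
      rw [Real.exp_neg, Real.exp_log (by positivity), one_div]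
    rw [hexp]
    rw [← ENNReal.ofReal_add (by positivity) (by positivity)]
    have : (1:ℝ) / (M:ℝ) ^ 2 + 1 / (M:ℝ) ^ 2 = 2 / (M:ℝ) ^ 2 := by ring
    rw [this]
    rw [ENNReal.ofReal_div_of_pos (by positivity), ENNReal.ofReal_ofNat,
      ENNReal.ofReal_pow (Nat.cast_nonneg M), ENNReal.ofReal_natCast]
  calc (1 : ℝ≥0∞) - 2 / (M : ℝ≥0∞) ^ 2
      ≤ 1 - pm Gᶜ := tsub_le_tsub_left hbound 1
    _ = pm G := by
        have := prob_compl_eq_one_sub (μ := pm) hGmeas.compl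
        rw [compl_compl] at this
        exact this.symm
    _ ≤ _ := measure_mono hsubset
end

section
/- Let ν be a probability measure on ℝⁿ, let M ≥ 1, let x_1, …, x_N ∈ ℝⁿ, and let δ > 0. Define V(i,j) = ν({t ∈ ℝⁿ : t^k ≥ max(x_i^k, x_j^k) for all k}) and, for t = (t_1, …, t_M) ∈ (ℝⁿ)^M, V̂_t(i,j) = (1/M) ∑_{q=1}^M 1{t_q^k ≥ max(x_i^k, x_j^k) for all k}. Then ν^⊗M({t : (1/N²) ∑_{i,j=1}^N |V(i,j) − V̂_t(i,j)| ≤ δ}) ≥ 1 − N(N+1)·exp(−2Mδ²). -/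
open MeasureTheory
open scoped ENNReal

open Real ProbabilityTheory


lemma hoeff_log_bound (p : ℝ) (hp0 : 0 ≤ p) (hp1 : p ≤ 1) (s : ℝ) :
    Real.log (1 - p + p * Real.exp s) ≤ s * p + s ^ 2 / 8 := by
  set D : ℝ → ℝ := fun x => 1 - p + p * Real.exp x with hDdef
  have hD : ∀ x, 0 < D x := by
    intro x
    show 0 < 1 - p + p * Real.exp x
    have hc := Real.exp_pos x
    rcases le_total (Real.exp x) 1 with h | h
    · nlinarith [mul_nonneg (sub_nonneg.2 hp1) (sub_nonneg.2 h)]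
    · nlinarith [mul_le_mul_of_nonneg_left h hp0]
  set u : ℝ → ℝ := fun x => p * Real.exp x / D x with hudef
  set h : ℝ → ℝ := fun x => p + x / 4 - u x with hhdef
  set f : ℝ → ℝ := fun x => x * p + x ^ 2 / 8 - Real.log (D x) with hfdef
  have hderivD : ∀ x, HasDerivAt D (p * Real.exp x) x := by
    intro x
    exact ((Real.hasDerivAt_exp x).const_mul p).const_add (1 - p)
  have hu : ∀ x, HasDerivAt u (u x - u x ^ 2) x := by
    intro x
    have h1 := ((Real.hasDerivAt_exp x).const_mul p).div (hderivD x) (hD x).ne'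
    refine h1.congr_deriv ?_
    have hne := (hD x).ne'
    simp only [hudef]
    field_simp
  have hh : ∀ x, HasDerivAt h (1 / 4 - (u x - u x ^ 2)) x := by
    intro x
    have h1 : HasDerivAt (fun x : ℝ => p + x / 4) (1 / 4) x := by
      simpa using ((hasDerivAt_id x).div_const 4).const_add p
    exact h1.sub (hu x)
  have hf : ∀ x, HasDerivAt f (h x) x := by
    intro x
    have h1 : HasDerivAt (fun x : ℝ => x * p + x ^ 2 / 8) (p + x / 4) x := by
      have := ((hasDerivAt_pow 2 x).div_const 8)
      have h2 := (hasDerivAt_id x).mul_const p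
      refine (h2.add this).congr_deriv ?_
      norm_num
      ring
    have h2 : HasDerivAt (fun x => Real.log (D x)) (p * Real.exp x / D x) x :=
      (hderivD x).log (hD x).ne'
    exact h1.sub h2
  have hmono : Monotone h := by
    refine monotone_of_deriv_nonneg (fun x => (hh x).differentiableAt) (fun x => ?_)
    rw [(hh x).deriv]
    nlinarith [sq_nonneg (u x - 1 / 2)]
  have h0 : h 0 = 0 := by
    have : D 0 = 1 := by simp [hDdef]
    simp [hhdef, hudef, this]
  have f0 : f 0 = 0 := by
    have : D 0 = 1 := by simp [hDdef]
    simp [hfdef, this]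
  have hfd : Differentiable ℝ f := fun x => (hf x).differentiableAt
  have key : 0 ≤ f s := by
    rcases le_total 0 s with hs | hs
    · have := monotoneOn_of_deriv_nonneg (convex_Ici (0:ℝ)) hfd.continuous.continuousOn
        (fun x _ => (hfd x).differentiableWithinAt)
        (fun x hx => by
          rw [(hf x).deriv]
          rw [← h0]
          exact hmono (le_of_lt (by simpa using hx)))
      have := this (Set.self_mem_Ici) hs hs
      rwa [f0] at this
    · have := antitoneOn_of_deriv_nonpos (convex_Iic (0:ℝ)) hfd.continuous.continuousOn
        (fun x _ => (hfd x).differentiableWithinAt)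
        (fun x hx => by
          rw [(hf x).deriv]
          rw [← h0]
          exact hmono (le_of_lt (by simpa using hx)))
      have := this hs (Set.self_mem_Iic) hs
      rwa [f0] at this
  have : Real.log (D s) ≤ s * p + s ^ 2 / 8 := by
    simp only [hfdef] at key
    linarith
  simpa [hDdef] using this

lemma bern_mgf_le (p s : ℝ) (hp0 : 0 ≤ p) (hp1 : p ≤ 1) :
    p * Real.exp (s * (1 - p)) + (1 - p) * Real.exp (s * (0 - p)) ≤ Real.exp (s ^ 2 / 8) := by
  have hDpos : 0 < 1 - p + p * Real.exp s := by
    have hc := Real.exp_pos s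
    rcases le_total (Real.exp s) 1 with h | h
    · nlinarith [mul_nonneg (sub_nonneg.2 hp1) (sub_nonneg.2 h)]
    · nlinarith [mul_le_mul_of_nonneg_left h hp0]
  have hD : 1 - p + p * Real.exp s ≤ Real.exp (s * p + s ^ 2 / 8) := by
    rw [← Real.exp_log hDpos]
    exact Real.exp_le_exp.2 (hoeff_log_bound p hp0 hp1 s)
  have e1 : Real.exp (s * (1 - p)) = Real.exp (s * (0 - p)) * Real.exp s := by
    rw [← Real.exp_add]; ring_nf
  have key : p * Real.exp (s * (1 - p)) + (1 - p) * Real.exp (s * (0 - p))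
      = Real.exp (s * (0 - p)) * (1 - p + p * Real.exp s) := by
    rw [e1]; ring
  rw [key]
  calc Real.exp (s * (0 - p)) * (1 - p + p * Real.exp s)
      ≤ Real.exp (s * (0 - p)) * Real.exp (s * p + s ^ 2 / 8) :=
        mul_le_mul_of_nonneg_left hD (Real.exp_pos _).le
    _ = Real.exp (s ^ 2 / 8) := by rw [← Real.exp_add]; ring_nf

lemma integral_exp_indicator_le {E : Type*} [MeasurableSpace E] (ν : Measure E)
    [IsProbabilityMeasure ν] {S : Set E} (hS : MeasurableSet S) (s : ℝ) :
    ∫ x, Real.exp (s * (S.indicator (fun _ => (1:ℝ)) x - (ν S).toReal)) ∂ν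
      ≤ Real.exp (s ^ 2 / 8) := by
  set p := (ν S).toReal with hp
  have hp0 : 0 ≤ p := ENNReal.toReal_nonneg
  have hp1 : p ≤ 1 := by
    rw [hp]
    exact ENNReal.toReal_le_of_le_ofReal zero_le_one (by simpa using prob_le_one (μ := ν) (s := S))
  have hsplit : (fun x => Real.exp (s * (S.indicator (fun _ => (1:ℝ)) x - p)))
      = fun x => S.indicator (fun _ => Real.exp (s * (1 - p)) - Real.exp (s * (0 - p))) x
          + Real.exp (s * (0 - p)) := by
    funext x
    by_cases hx : x ∈ S <;> simp [hx, Set.indicator]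
  have hval : ∫ x, Real.exp (s * (S.indicator (fun _ => (1:ℝ)) x - p)) ∂ν
      = p * Real.exp (s * (1 - p)) + (1 - p) * Real.exp (s * (0 - p)) := by
    rw [hsplit, integral_add ((integrable_const _).indicator hS) (integrable_const _),
      integral_indicator_const _ hS, integral_const]
    simp only [measure_univ, ENNReal.toReal_one, Measure.real_def, smul_eq_mul, one_mul, one_smul, ← hp]
    ring
  rw [hval]
  exact bern_mgf_le p s hp0 hp1

lemma integral_pi_prod_eq_pow {E : Type*} {mE : MeasurableSpace E} (μ : Measure E)
    [SigmaFinite μ] (ι : Type*) [Fintype ι] (f : E → ℝ) :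
    ∫ x : ι → E, ∏ i, f (x i) ∂(Measure.pi fun _ => μ) = (∫ x, f x ∂μ) ^ (Fintype.card ι) := by
  letI : MeasureSpace E := ⟨μ⟩
  exact MeasureTheory.integral_fintype_prod_eq_pow f

lemma pair_bad_bound {E : Type*} [MeasurableSpace E] (ν : Measure E)
    [IsProbabilityMeasure ν] {S : Set E} (hS : MeasurableSet S) (M : ℕ) (hM : 1 ≤ M)
    (δ : ℝ) (hδ : 0 < δ) :
    Measure.pi (fun _ : Fin M => ν)
      {t : Fin M → E | δ < |(ν S).toReal
          - (1 / (M : ℝ)) * ∑ q : Fin M, S.indicator (fun _ => (1:ℝ)) (t q)|}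
      ≤ ENNReal.ofReal (2 * Real.exp (-2 * M * δ ^ 2)) := by
  set μ := Measure.pi (fun _ : Fin M => ν) with hμ
  haveI : IsProbabilityMeasure μ := by rw [hμ]; infer_instance
  set p := (ν S).toReal with hp
  have hp0 : 0 ≤ p := ENNReal.toReal_nonneg
  have hp1 : p ≤ 1 := by
    rw [hp]
    exact ENNReal.toReal_le_of_le_ofReal zero_le_one (by simpa using prob_le_one (μ := ν) (s := S))
  have hMpos : (0:ℝ) < M := by exact_mod_cast hM
  set X : (Fin M → E) → ℝ := fun t => ∑ q, (S.indicator (fun _ => (1:ℝ)) (t q) - p) with hX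
  have hXmeas : Measurable X := by
    apply Finset.measurable_sum
    intro q _
    exact ((measurable_const.indicator hS).comp (measurable_pi_apply q)).sub measurable_const
  have habs1 : ∀ (y : E), |S.indicator (fun _ => (1:ℝ)) y - p| ≤ 1 := by
    intro y
    by_cases hy : y ∈ S <;> simp [hy, abs_le] <;> constructor <;> linarith
  have hXabs : ∀ t, |X t| ≤ M := by
    intro t
    calc |X t| ≤ ∑ q : Fin M, |S.indicator (fun _ => (1:ℝ)) (t q) - p| :=
          Finset.abs_sum_le_sum_abs _ _
      _ ≤ ∑ _q : Fin M, (1:ℝ) := Finset.sum_le_sum fun q _ => habs1 _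
      _ = M := by simp
  have hint : ∀ c : ℝ, Integrable (fun t => Real.exp (c * X t)) μ := by
    intro c
    refine Integrable.mono' (integrable_const (Real.exp (|c| * M)))
      ((hXmeas.const_mul c).exp.aestronglyMeasurable) (ae_of_all _ fun t => ?_)
    rw [Real.norm_eq_abs, Real.abs_exp]
    apply Real.exp_le_exp.2
    calc c * X t ≤ |c * X t| := le_abs_self _
      _ = |c| * |X t| := abs_mul _ _
      _ ≤ |c| * M := mul_le_mul_of_nonneg_left (hXabs t) (abs_nonneg c)
  have hmgf : ∀ c : ℝ, mgf X μ c ≤ Real.exp (M * (c ^ 2 / 8)) := by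
    intro c
    have h1 : mgf X μ c = ∫ t, ∏ q : Fin M,
        Real.exp (c * (S.indicator (fun _ => (1:ℝ)) (t q) - p)) ∂μ := by
      unfold mgf
      congr 1
      funext t
      simp only [hX, Finset.mul_sum, Real.exp_sum]
    have h2 := integral_pi_prod_eq_pow ν (Fin M)
      (fun y => Real.exp (c * (S.indicator (fun _ => (1:ℝ)) y - p)))
    rw [h1, hμ, h2]
    calc (∫ x, Real.exp (c * (S.indicator (fun _ => (1:ℝ)) x - p)) ∂ν) ^ Fintype.card (Fin M)
        ≤ Real.exp (c ^ 2 / 8) ^ Fintype.card (Fin M) := by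
          apply pow_le_pow_left₀ (integral_nonneg fun y => (Real.exp_pos _).le)
          exact integral_exp_indicator_le ν hS c
      _ = Real.exp (M * (c ^ 2 / 8)) := by
          rw [← Real.exp_nat_mul, Fintype.card_fin]
  have htailU : (μ {t | (M:ℝ) * δ ≤ X t}).toReal ≤ Real.exp (-2 * M * δ ^ 2) := by
    have h := measure_ge_le_exp_mul_mgf (μ := μ) (X := X) ((M:ℝ) * δ) (t := 4 * δ)
      (by positivity) (hint _)
    calc (μ {t | (M:ℝ) * δ ≤ X t}).toReal
        ≤ Real.exp (-(4 * δ) * ((M:ℝ) * δ)) * mgf X μ (4 * δ) := h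
      _ ≤ Real.exp (-(4 * δ) * ((M:ℝ) * δ)) * Real.exp (M * ((4 * δ) ^ 2 / 8)) :=
          mul_le_mul_of_nonneg_left (hmgf _) (Real.exp_pos _).le
      _ = Real.exp (-2 * M * δ ^ 2) := by rw [← Real.exp_add]; ring_nf
  have htailL : (μ {t | X t ≤ -((M:ℝ) * δ)}).toReal ≤ Real.exp (-2 * M * δ ^ 2) := by
    have h := measure_le_le_exp_mul_mgf (μ := μ) (X := X) (-((M:ℝ) * δ)) (t := -(4 * δ))
      (by linarith) (hint _)
    calc (μ {t | X t ≤ -((M:ℝ) * δ)}).toReal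
        ≤ Real.exp (-(-(4 * δ)) * -((M:ℝ) * δ)) * mgf X μ (-(4 * δ)) := h
      _ ≤ Real.exp (-(-(4 * δ)) * -((M:ℝ) * δ)) * Real.exp (M * ((-(4 * δ)) ^ 2 / 8)) :=
          mul_le_mul_of_nonneg_left (hmgf _) (Real.exp_pos _).le
      _ = Real.exp (-2 * M * δ ^ 2) := by rw [← Real.exp_add]; ring_nf
  have hsub : {t : Fin M → E | δ < |p
        - (1 / (M : ℝ)) * ∑ q : Fin M, S.indicator (fun _ => (1:ℝ)) (t q)|}
      ⊆ {t | (M:ℝ) * δ ≤ X t} ∪ {t | X t ≤ -((M:ℝ) * δ)} := by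
    intro t ht
    simp only [Set.mem_setOf_eq] at ht
    have hXeq : p - (1 / (M : ℝ)) * ∑ q : Fin M, S.indicator (fun _ => (1:ℝ)) (t q)
        = -(X t) / M := by
      have hXt : X t = (∑ q : Fin M, S.indicator (fun _ => (1:ℝ)) (t q)) - M * p := by
        simp only [hX]
        rw [Finset.sum_sub_distrib, Finset.sum_const, Finset.card_univ, Fintype.card_fin,
          nsmul_eq_mul]
      rw [hXt]
      field_simp
      ring
    rw [hXeq, abs_div, abs_neg, abs_of_pos hMpos] at ht
    have hlt : (M:ℝ) * δ < |X t| := by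
      rw [lt_div_iff₀ hMpos] at ht
      linarith [ht]
    rcases lt_abs.1 hlt with h | h
    · exact Or.inl (Set.mem_setOf_eq ▸ h.le)
    · exact Or.inr (Set.mem_setOf_eq ▸ by linarith)
  calc μ _ ≤ μ ({t | (M:ℝ) * δ ≤ X t} ∪ {t | X t ≤ -((M:ℝ) * δ)}) := measure_mono hsub
    _ ≤ μ {t | (M:ℝ) * δ ≤ X t} + μ {t | X t ≤ -((M:ℝ) * δ)} := measure_union_le _ _
    _ ≤ ENNReal.ofReal (Real.exp (-2 * M * δ ^ 2)) + ENNReal.ofReal (Real.exp (-2 * M * δ ^ 2)) := by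
        gcongr
        · exact ENNReal.ofReal_toReal (measure_ne_top μ _) ▸ ENNReal.ofReal_le_ofReal htailU
        · exact ENNReal.ofReal_toReal (measure_ne_top μ _) ▸ ENNReal.ofReal_le_ofReal htailL
    _ = ENNReal.ofReal (2 * Real.exp (-2 * M * δ ^ 2)) := by
        rw [← ENNReal.ofReal_add (Real.exp_pos _).le (Real.exp_pos _).le, two_mul]

lemma card_pairs_le (N : ℕ) :
    ((Finset.univ.filter (fun p : Fin N × Fin N => p.1 ≤ p.2)).card) * 2 = N * (N + 1) := by
  classical
  rw [Finset.card_filter, Fintype.sum_prod_type_right]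
  have hinner : ∀ j : Fin N, (∑ i : Fin N, if i ≤ j then (1:ℕ) else 0) = j.val + 1 := by
    intro j
    rw [← Finset.card_filter]
    have : Finset.univ.filter (fun i : Fin N => i ≤ j) = Finset.Iic j := by
      ext i; simp
    rw [this, Fin.card_Iic]
  simp only [hinner]
  rw [Fin.sum_univ_eq_sum_range (fun i => i + 1) N]
  rw [Finset.sum_add_distrib, Finset.sum_const, Finset.card_range, smul_eq_mul, mul_one]
  rcases N with _ | m
  · simp
  · have := Finset.sum_range_id_mul_two (m + 1)
    simp only [Nat.succ_sub_one] at this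
    nlinarith [this]


/-- With `V i j = ν {t | ∀ k, t k ≥ max (xs i k) (xs j k)}` and
`V̂_t i j = (1/M) ∑ q, 1{t q ≥ max coordinatewise}`, the probability under `ν^⊗M`
that `(1/N²) ∑ᵢⱼ |V i j − V̂_t i j| ≤ δ` is at least `1 − N(N+1) exp(−2Mδ²)`. -/
theorem empirical_V_matrix_concentration (n N M : ℕ) (hM : 1 ≤ M)
    (ν : Measure (Fin n → ℝ)) [IsProbabilityMeasure ν]
    (xs : Fin N → Fin n → ℝ) (δ : ℝ) (hδ : 0 < δ) :
    (1 : ℝ≥0∞) - ENNReal.ofReal ((N : ℝ) * (N + 1) * Real.exp (-2 * M * δ ^ 2))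
      ≤ Measure.pi (fun _ : Fin M => ν)
          {t : Fin M → (Fin n → ℝ) |
            (1 / (N : ℝ) ^ 2) * ∑ i : Fin N, ∑ j : Fin N,
              |(ν {s : Fin n → ℝ | ∀ k, max (xs i k) (xs j k) ≤ s k}).toReal
                - (1 / (M : ℝ)) * ∑ q : Fin M,
                    (if ∀ k, max (xs i k) (xs j k) ≤ t q k then (1:ℝ) else 0)|
            ≤ δ} := by
  classical
  set μ := Measure.pi (fun _ : Fin M => ν) with hμ
  set Sf : Fin N → Fin N → Set (Fin n → ℝ) :=
    fun i j => {s | ∀ k, max (xs i k) (xs j k) ≤ s k} with hSf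
  have hSmeas : ∀ i j, MeasurableSet (Sf i j) := by
    intro i j
    have : Sf i j = ⋂ k, (fun s : Fin n → ℝ => s k) ⁻¹' Set.Ici (max (xs i k) (xs j k)) := by
      ext s; simp [hSf, Set.mem_iInter]
    rw [this]
    exact MeasurableSet.iInter fun k => (measurable_pi_apply k) measurableSet_Ici
  have hind : ∀ (i j : Fin N) (y : Fin n → ℝ),
      (if ∀ k, max (xs i k) (xs j k) ≤ y k then (1:ℝ) else 0)
        = (Sf i j).indicator (fun _ => (1:ℝ)) y := by
    intro i j y
    have hmem : y ∈ Sf i j ↔ (∀ k, max (xs i k) (xs j k) ≤ y k) := Iff.rfl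
    by_cases h : ∀ k, max (xs i k) (xs j k) ≤ y k
    · rw [if_pos h, Set.indicator_of_mem (hmem.2 h)]
    · rw [if_neg h, Set.indicator_of_notMem (fun hy => h (hmem.1 hy))]
  simp only [hind]
  set d : Fin N → Fin N → (Fin M → (Fin n → ℝ)) → ℝ := fun i j t =>
    (ν (Sf i j)).toReal - (1 / (M : ℝ)) * ∑ q : Fin M, (Sf i j).indicator (fun _ => (1:ℝ)) (t q)
    with hd
  set G : Set (Fin M → (Fin n → ℝ)) :=
    {t | (1 / (N : ℝ) ^ 2) * ∑ i : Fin N, ∑ j : Fin N, |d i j t| ≤ δ} with hG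
  show (1 : ℝ≥0∞) - ENNReal.ofReal ((N : ℝ) * (N + 1) * Real.exp (-2 * M * δ ^ 2)) ≤ μ G
  set P : Finset (Fin N × Fin N) := Finset.univ.filter (fun p => p.1 ≤ p.2) with hP
  set bad : Fin N × Fin N → Set (Fin M → (Fin n → ℝ)) :=
    fun p => {t | δ < |d p.1 p.2 t|} with hbad
  have hdsymm : ∀ i j t, d i j t = d j i t := by
    intro i j t
    have : Sf i j = Sf j i := by
      ext s
      exact forall_congr' fun k => by rw [max_comm]
    simp only [hd, this]
  have h2 : Gᶜ ⊆ ⋃ p ∈ P, bad p := by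
    intro t ht
    simp only [hG, Set.mem_compl_iff, Set.mem_setOf_eq, not_le] at ht
    by_contra hcon
    simp only [Set.mem_iUnion, not_exists] at hcon
    have hall : ∀ i j, |d i j t| ≤ δ := by
      intro i j
      rcases le_total i j with hij | hij
      · have := hcon (i, j)
        simp only [hbad, Set.mem_setOf_eq, hP, Finset.mem_filter, Finset.mem_univ,
          true_and, not_lt] at this
        exact this hij
      · have := hcon (j, i)
        simp only [hbad, Set.mem_setOf_eq, hP, Finset.mem_filter, Finset.mem_univ,
          true_and, not_lt] at this
        rw [hdsymm]
        exact this hij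
    have hsum : ∑ i : Fin N, ∑ j : Fin N, |d i j t| ≤ (N:ℝ) ^ 2 * δ := by
      calc ∑ i : Fin N, ∑ j : Fin N, |d i j t| ≤ ∑ _i : Fin N, ∑ _j : Fin N, δ :=
            Finset.sum_le_sum fun i _ => Finset.sum_le_sum fun j _ => hall i j
        _ = (N:ℝ) ^ 2 * δ := by simp [Finset.sum_const]; ring
    rcases Nat.eq_zero_or_pos N with rfl | hN
    · simp at ht; linarith
    · have hN2 : (0:ℝ) < (N:ℝ) ^ 2 := by positivity
      have : (1 / (N : ℝ) ^ 2) * ∑ i : Fin N, ∑ j : Fin N, |d i j t|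
          ≤ (1 / (N : ℝ) ^ 2) * ((N:ℝ) ^ 2 * δ) :=
        mul_le_mul_of_nonneg_left hsum (by positivity)
      rw [one_div, inv_mul_cancel_left₀ hN2.ne'] at this
      rw [one_div] at ht
      linarith
  have h4 : ∀ p ∈ P, μ (bad p) ≤ ENNReal.ofReal (2 * Real.exp (-2 * M * δ ^ 2)) := by
    intro p _
    exact pair_bad_bound ν (hSmeas p.1 p.2) M hM δ hδ
  have hGc : μ Gᶜ ≤ ENNReal.ofReal ((N : ℝ) * (N + 1) * Real.exp (-2 * M * δ ^ 2)) := by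
    calc μ Gᶜ ≤ μ (⋃ p ∈ P, bad p) := measure_mono h2
      _ ≤ ∑ p ∈ P, μ (bad p) := measure_biUnion_finset_le P bad
      _ ≤ ∑ _p ∈ P, ENNReal.ofReal (2 * Real.exp (-2 * M * δ ^ 2)) := Finset.sum_le_sum h4
      _ = (P.card : ℝ≥0∞) * ENNReal.ofReal (2 * Real.exp (-2 * M * δ ^ 2)) := by
          rw [Finset.sum_const, nsmul_eq_mul]
      _ = ENNReal.ofReal ((P.card : ℝ) * (2 * Real.exp (-2 * M * δ ^ 2))) := by
          rw [← ENNReal.ofReal_natCast, ← ENNReal.ofReal_mul (by positivity)]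
      _ = ENNReal.ofReal ((N : ℝ) * (N + 1) * Real.exp (-2 * M * δ ^ 2)) := by
          congr 1
          have hc : ((P.card * 2 : ℕ) : ℝ) = ((N * (N + 1) : ℕ) : ℝ) := by
            rw [card_pairs_le N]
          push_cast at hc
          linear_combination Real.exp (-2 * ↑M * δ ^ 2) * hc
  have h1 : (1:ℝ≥0∞) ≤ μ G + μ Gᶜ := by
    calc (1:ℝ≥0∞) = μ Set.univ := measure_univ.symm
      _ = μ (G ∪ Gᶜ) := by rw [Set.union_compl_self]
      _ ≤ μ G + μ Gᶜ := measure_union_le _ _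
  rw [tsub_le_iff_right]
  exact h1.trans (add_le_add_right hGc _)
end

section
/- Let ν be a probability measure on ℝⁿ, let M ≥ 1, let x_1, …, x_N ∈ ℝⁿ, let l_1, …, l_N ∈ ℝ, and let δ > 0. Define V(i,j) = ν({t ∈ ℝⁿ : t^k ≥ max(x_i^k, x_j^k) for all k}), for t = (t_1, …, t_M) ∈ (ℝⁿ)^M define V̂_t(i,j) = (1/M) ∑_{q=1}^M 1{t_q^k ≥ max(x_i^k, x_j^k) for all k}, and for an N×N matrix W define ρ²(W) = (1/N²) ∑_{i,j=1}^N l_i l_j W(i,j). Then, with δ' = δ · max_{1≤i,j≤N} |l_i l_j|, ν^⊗M({t : |ρ²(V) − ρ²(V̂_t)| ≤ δ'}) ≥ 1 − N(N+1)·exp(−2Mδ²). -/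
open MeasureTheory
open scoped ENNReal

open Real in
lemma hoeff_bern {p : ℝ} (hp0 : 0 ≤ p) (hp1 : p ≤ 1) (t : ℝ) :
    1 + p * (Real.exp t - 1) ≤ Real.exp (p * t + t ^ 2 / 8) := by
  set D : ℝ → ℝ := fun s => 1 - p + p * Real.exp s with hDdef
  have hD : ∀ s, 0 < D s := by
    intro s
    have := Real.exp_pos s
    rcases lt_or_eq_of_le hp1 with h | h
    · have : 0 ≤ p * Real.exp s := mul_nonneg hp0 this.le
      simp only [hDdef]; linarith
    · simp only [hDdef, ← h]; nlinarith
  have hDd : ∀ s, HasDerivAt D (p * Real.exp s) s := by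
    intro s
    exact ((Real.hasDerivAt_exp s).const_mul p).const_add (1 - p)
  set G : ℝ → ℝ := fun s => p + s / 4 - p * Real.exp s / D s with hGdef
  set F : ℝ → ℝ := fun s => p * s + s ^ 2 / 8 - Real.log (D s) with hFdef
  have hFd : ∀ s, HasDerivAt F (G s) s := by
    intro s
    have h1 : HasDerivAt (fun s : ℝ => p * s + s ^ 2 / 8) (p + s * 2 / 8 * 1) s := by
      have := ((hasDerivAt_id s).const_mul p).add
        (((hasDerivAt_pow 2 s)).div_const 8)
      exact this.congr_deriv (by simp only [Nat.cast_ofNat, pow_one, mul_one, show 2 - 1 = 1 from rfl]; ring)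
    have h2 : HasDerivAt (fun s => Real.log (D s)) (p * Real.exp s / D s) s :=
      (hDd s).log (hD s).ne'
    have := h1.sub h2
    refine this.congr_deriv ?_
    ring
  have hGd : ∀ s, HasDerivAt G (1 / 4 - (1 - p) * (p * Real.exp s) / (D s) ^ 2) s := by
    intro s
    have h1 : HasDerivAt (fun s : ℝ => p + s / 4) (1 / 4) s := by
      simpa using ((hasDerivAt_id s).div_const 4).const_add p
    have h2 : HasDerivAt (fun s => p * Real.exp s / D s)
        ((p * Real.exp s * D s - p * Real.exp s * (p * Real.exp s)) / (D s) ^ 2) s :=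
      ((Real.hasDerivAt_exp s).const_mul p).div (hDd s) (hD s).ne'
    have := h1.sub h2
    refine (this.congr_deriv ?_)
    symm
    have hds : D s = 1 - p + p * Real.exp s := rfl
    rw [hds]
    have h2 := hD s
    rw [hds] at h2
    field_simp
    ring
  have hGmono : Monotone G :=
    monotone_of_deriv_nonneg (fun s => (hGd s).differentiableAt) (by
      intro s
      rw [(hGd s).deriv]
      have h2 := hD s
      have h3 : D s = 1 - p + p * Real.exp s := rfl
      have h4 : 0 ≤ p * Real.exp s := mul_nonneg hp0 (Real.exp_pos s).le
      rw [sub_nonneg, div_le_iff₀ (by positivity)]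
      nlinarith [sq_nonneg ((1 - p) - p * Real.exp s)])
  have hG0 : G 0 = 0 := by
    simp only [hGdef, hDdef]
    rw [Real.exp_zero]
    field_simp
    ring
  have hF0 : F 0 = 0 := by
    simp [hFdef, hDdef]
  have hFnonneg : ∀ s, 0 ≤ F s := by
    intro s
    rcases le_total 0 s with h | h
    · have := monotoneOn_of_deriv_nonneg (convex_Ici (0:ℝ))
        (fun x _ => ((hFd x).differentiableAt).continuousAt.continuousWithinAt)
        (fun x _ => ((hFd x).differentiableAt).differentiableWithinAt)
        (fun x hx => by
          rw [(hFd x).deriv]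
          rw [interior_Ici] at hx
          calc (0:ℝ) = G 0 := hG0.symm
          _ ≤ G x := hGmono hx.le)
        (Set.self_mem_Ici) (Set.mem_Ici.mpr h) h
      rwa [hF0] at this
    · have := antitoneOn_of_deriv_nonpos (convex_Iic (0:ℝ))
        (fun x _ => ((hFd x).differentiableAt).continuousAt.continuousWithinAt)
        (fun x _ => ((hFd x).differentiableAt).differentiableWithinAt)
        (fun x hx => by
          rw [(hFd x).deriv]
          rw [interior_Iic] at hx
          calc G x ≤ G 0 := hGmono hx.le
          _ = 0 := hG0)
        (Set.mem_Iic.mpr h) (Set.self_mem_Iic) h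
      rwa [hF0] at this
  have key := hFnonneg t
  have : Real.log (D t) ≤ p * t + t ^ 2 / 8 := by
    simp only [hFdef] at key; linarith
  have := (Real.log_le_iff_le_exp (hD t)).mp this
  calc 1 + p * (Real.exp t - 1) = D t := by simp only [hDdef]; ring
  _ ≤ _ := this

lemma hoeff_one_side {E : Type*} [MeasurableSpace E] (μ : Measure E) [IsProbabilityMeasure μ]
    (M : ℕ) (S : Set E) (hS : MeasurableSet S) (δ : ℝ) (hδ : 0 < δ) :
    Measure.pi (fun _ : Fin M => μ)
      {t : Fin M → E | (M : ℝ) * ((μ S).toReal + δ) ≤ ∑ q : Fin M, S.indicator (fun _ => (1:ℝ)) (t q)}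
      ≤ ENNReal.ofReal (Real.exp (-2 * M * δ ^ 2)) := by
  letI : MeasureSpace E := ⟨μ⟩
  haveI : SigmaFinite (volume : Measure E) := (inferInstance : SigmaFinite μ)
  set p : ℝ := (μ S).toReal with hpdef
  have hp0 : 0 ≤ p := ENNReal.toReal_nonneg
  have hp1 : p ≤ 1 := by
    simpa using ENNReal.toReal_mono ENNReal.one_ne_top (prob_le_one (μ := μ) (s := S))
  set lam : ℝ := 4 * δ with hlam
  have hlampos : 0 < lam := by positivity
  set f1 : E → ℝ := fun x => Real.exp (lam * (S.indicator (fun _ => (1:ℝ)) x - p)) with hf1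
  have hf1eq : f1 = fun x =>
      S.indicator (fun _ => Real.exp (lam * (1 - p)) - Real.exp (lam * (0 - p))) x
        + Real.exp (lam * (0 - p)) := by
    funext x
    by_cases hx : x ∈ S <;>
      simp [hf1, Set.indicator_of_mem, Set.indicator_of_notMem, hx]
  have hf1int : Integrable f1 μ := by
    rw [hf1eq]
    exact ((integrable_const _).indicator hS).add (integrable_const _)
  have hf1val : ∫ x, f1 x ∂μ ≤ Real.exp (lam ^ 2 / 8) := by
    rw [hf1eq]
    rw [integral_add ((integrable_const _).indicator hS) (integrable_const _)]
    rw [integral_indicator_const _ hS, integral_const]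
    simp only [smul_eq_mul, Measure.real, measure_univ, ENNReal.toReal_one, one_mul]
    have hb := hoeff_bern hp0 hp1 lam
    have he : Real.exp (lam * (1 - p)) = Real.exp (-(lam * p)) * Real.exp lam := by
      rw [← Real.exp_add]; ring_nf
    have he2 : Real.exp (lam * (0 - p)) = Real.exp (-(lam * p)) := by ring_nf
    rw [he, he2]
    have h3 : Real.exp (-(lam * p)) * (1 + p * (Real.exp lam - 1))
        ≤ Real.exp (-(lam * p)) * Real.exp (p * lam + lam ^ 2 / 8) :=
      mul_le_mul_of_nonneg_left hb (Real.exp_pos _).le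
    rw [← Real.exp_add] at h3
    have : -(lam * p) + (p * lam + lam ^ 2 / 8) = lam ^ 2 / 8 := by ring
    rw [this] at h3
    calc p * (Real.exp (-(lam * p)) * Real.exp lam - Real.exp (-(lam * p)))
          + Real.exp (-(lam * p))
        = Real.exp (-(lam * p)) * (1 + p * (Real.exp lam - 1)) := by ring
      _ ≤ _ := h3
  set g : (Fin M → E) → ℝ := fun t => ∏ q : Fin M, f1 (t q) with hg
  have hpi : Measure.pi (fun _ : Fin M => μ) = (volume : Measure (Fin M → E)) :=
    (volume_pi).symm
  have hgint : Integrable g (Measure.pi fun _ : Fin M => μ) := by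
    rw [hpi]
    exact Integrable.fintype_prod (f := fun _ : Fin M => f1) (fun _ => hf1int)
  have hgval : ∫ t, g t ∂(Measure.pi fun _ : Fin M => μ) ≤ Real.exp (M * lam ^ 2 / 8) := by
    rw [hpi]
    rw [← hpi, integral_fintype_prod_eq_pow (ι := Fin M) f1]
    simp only [Fintype.card_fin]
    calc (∫ x, f1 x ∂(volume : Measure E)) ^ M ≤ Real.exp (lam ^ 2 / 8) ^ M := by
          apply pow_le_pow_left₀ _ hf1val
          exact integral_nonneg fun x => (Real.exp_pos _).le
      _ = Real.exp (M * lam ^ 2 / 8) := by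
          rw [← Real.exp_nat_mul]; ring_nf
  have hgnn : 0 ≤ᵐ[Measure.pi fun _ : Fin M => μ] g :=
    Filter.Eventually.of_forall fun t => Finset.prod_nonneg fun q _ => (Real.exp_pos _).le
  have hmarkov := mul_meas_ge_le_integral_of_nonneg hgnn hgint (Real.exp (lam * (M * δ)))
  -- event inclusion
  have hsub : {t : Fin M → E | (M : ℝ) * (p + δ) ≤ ∑ q : Fin M, S.indicator (fun _ => (1:ℝ)) (t q)}
      ⊆ {t | Real.exp (lam * (M * δ)) ≤ g t} := by
    intro t ht
    simp only [Set.mem_setOf_eq] at ht ⊢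
    have : g t = Real.exp (∑ q : Fin M, lam * (S.indicator (fun _ => (1:ℝ)) (t q) - p)) := by
      rw [Real.exp_sum]
    rw [this]
    apply Real.exp_le_exp.mpr
    have : ∑ q : Fin M, lam * (S.indicator (fun _ => (1:ℝ)) (t q) - p)
        = lam * ((∑ q : Fin M, S.indicator (fun _ => (1:ℝ)) (t q)) - M * p) := by
      rw [← Finset.mul_sum, Finset.sum_sub_distrib, Finset.sum_const, Finset.card_univ,
        Fintype.card_fin, nsmul_eq_mul]
    rw [this]
    have h2 : (M : ℝ) * δ ≤ (∑ q : Fin M, S.indicator (fun _ => (1:ℝ)) (t q)) - M * p := by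
      linarith
    exact mul_le_mul_of_nonneg_left h2 hlampos.le
  calc Measure.pi (fun _ : Fin M => μ)
        {t : Fin M → E | (M : ℝ) * (p + δ) ≤ ∑ q : Fin M, S.indicator (fun _ => (1:ℝ)) (t q)}
      ≤ Measure.pi (fun _ : Fin M => μ) {t | Real.exp (lam * (M * δ)) ≤ g t} :=
        measure_mono hsub
    _ ≤ ENNReal.ofReal (Real.exp (-2 * M * δ ^ 2)) := by
        rw [ENNReal.le_ofReal_iff_toReal_le (measure_ne_top _ _) (Real.exp_pos _).le]
        have hε : (0:ℝ) < Real.exp (lam * (M * δ)) := Real.exp_pos _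
        have h4 : (Measure.pi (fun _ : Fin M => μ) {t | Real.exp (lam * (M * δ)) ≤ g t}).toReal
            ≤ Real.exp (M * lam ^ 2 / 8) / Real.exp (lam * (M * δ)) := by
          rw [le_div_iff₀ hε]
          calc _ = Real.exp (lam * (M * δ)) * (Measure.pi (fun _ : Fin M => μ)
                {t | Real.exp (lam * (M * δ)) ≤ g t}).toReal := by ring
            _ ≤ _ := le_trans hmarkov hgval
        calc _ ≤ Real.exp (M * lam ^ 2 / 8) / Real.exp (lam * (M * δ)) := h4
          _ = Real.exp (-2 * M * δ ^ 2) := by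
              rw [← Real.exp_sub]; congr 1; rw [hlam]; ring

lemma hoeff_two_side {E : Type*} [MeasurableSpace E] (μ : Measure E) [IsProbabilityMeasure μ]
    (M : ℕ) (hM : 1 ≤ M) (S : Set E) (hS : MeasurableSet S) (δ : ℝ) (hδ : 0 < δ) :
    Measure.pi (fun _ : Fin M => μ)
      {t : Fin M → E | δ < |(μ S).toReal -
        (1 / (M:ℝ)) * ∑ q : Fin M, S.indicator (fun _ => (1:ℝ)) (t q)|}
      ≤ ENNReal.ofReal (2 * Real.exp (-2 * M * δ ^ 2)) := by
  have hM0 : (0:ℝ) < M := by exact_mod_cast hM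
  set p : ℝ := (μ S).toReal with hpdef
  have hpc : (μ Sᶜ).toReal = 1 - p := by
    rw [prob_compl_eq_one_sub hS]
    rw [ENNReal.toReal_sub_of_le prob_le_one ENNReal.one_ne_top, ENNReal.toReal_one]
  have hsub : {t : Fin M → E | δ < |p -
        (1 / (M:ℝ)) * ∑ q : Fin M, S.indicator (fun _ => (1:ℝ)) (t q)|}
      ⊆ {t : Fin M → E | (M : ℝ) * ((μ S).toReal + δ) ≤ ∑ q : Fin M,
            S.indicator (fun _ => (1:ℝ)) (t q)}
        ∪ {t : Fin M → E | (M : ℝ) * ((μ Sᶜ).toReal + δ) ≤ ∑ q : Fin M,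
            Sᶜ.indicator (fun _ => (1:ℝ)) (t q)} := by
    intro t ht
    simp only [Set.mem_setOf_eq] at ht
    set A : ℝ := ∑ q : Fin M, S.indicator (fun _ => (1:ℝ)) (t q) with hA
    have hAc : ∑ q : Fin M, Sᶜ.indicator (fun _ => (1:ℝ)) (t q) = M - A := by
      have : ∀ q : Fin M, Sᶜ.indicator (fun _ => (1:ℝ)) (t q)
          = 1 - S.indicator (fun _ => (1:ℝ)) (t q) := by
        intro q
        by_cases h : t q ∈ S <;>
          simp [Set.indicator_of_mem, Set.indicator_of_notMem, h]
      rw [Finset.sum_congr rfl fun q _ => this q, Finset.sum_sub_distrib,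
        Finset.sum_const, Finset.card_univ, Fintype.card_fin, nsmul_eq_mul, mul_one]
    rcases lt_abs.mp ht with h | h
    · -- δ < p - (1/M) A : lower tail, use complement
      right
      simp only [Set.mem_setOf_eq, hpc, hAc]
      have : (1 / (M:ℝ)) * A < p - δ := by linarith
      have h2 : A < M * (p - δ) := by
        have := mul_lt_mul_of_pos_left this hM0
        rw [← mul_assoc, mul_one_div, div_self hM0.ne', one_mul] at this
        linarith
      nlinarith
    · -- δ < (1/M) A - p : upper tail
      left
      simp only [Set.mem_setOf_eq, ← hpdef]
      have : p + δ < (1 / (M:ℝ)) * A := by linarith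
      have h2 : M * (p + δ) < A := by
        have := mul_lt_mul_of_pos_left this hM0
        rw [← mul_assoc, mul_one_div, div_self hM0.ne', one_mul] at this
        linarith
      linarith
  calc Measure.pi (fun _ : Fin M => μ) _ ≤ _ := measure_mono hsub
    _ ≤ Measure.pi (fun _ : Fin M => μ)
          {t : Fin M → E | (M : ℝ) * ((μ S).toReal + δ) ≤ ∑ q : Fin M,
            S.indicator (fun _ => (1:ℝ)) (t q)}
        + Measure.pi (fun _ : Fin M => μ)
          {t : Fin M → E | (M : ℝ) * ((μ Sᶜ).toReal + δ) ≤ ∑ q : Fin M,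
            Sᶜ.indicator (fun _ => (1:ℝ)) (t q)} := measure_union_le _ _
    _ ≤ ENNReal.ofReal (Real.exp (-2 * M * δ ^ 2)) + ENNReal.ofReal (Real.exp (-2 * M * δ ^ 2)) :=
        add_le_add (hoeff_one_side μ M S hS δ hδ) (hoeff_one_side μ M Sᶜ hS.compl δ hδ)
    _ = ENNReal.ofReal (2 * Real.exp (-2 * M * δ ^ 2)) := by
        rw [← ENNReal.ofReal_add (Real.exp_pos _).le (Real.exp_pos _).le]; ring_nf

lemma gauss_fin (N : ℕ) : (∑ j : Fin N, ((j:ℕ) + 1)) * 2 = N * (N + 1) := by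
  have h1 : (∑ j : Fin N, ((j:ℕ) + 1)) = ∑ i ∈ Finset.range N, (i + 1) :=
    Fin.sum_univ_eq_sum_range _ _
  have h2 : ∑ i ∈ Finset.range (N + 1), i = ∑ i ∈ Finset.range N, (i + 1) := by
    simpa using Finset.sum_range_succ' (fun i => i) N
  rw [h1, ← h2, Finset.sum_range_id_mul_two (N + 1)]
  simp [Nat.mul_comm]


/-- With `V i j = ν {t | ∀ k, t k ≥ max (xs i k) (xs j k)}`,
`V̂_t i j = (1/M) ∑ q, 1{t q ≥ max coordinatewise}`,
`ρ²(W) = (1/N²) ∑ᵢⱼ lᵢ lⱼ W i j` and `δ' = δ · maxᵢⱼ |lᵢ lⱼ|`, the probability under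
`ν^⊗M` that `|ρ²(V) − ρ²(V̂_t)| ≤ δ'` is at least `1 − N(N+1) exp(−2Mδ²)`. -/
theorem rho_sq_concentration (n N M : ℕ) (hN : 1 ≤ N) (hM : 1 ≤ M)
    (ν : Measure (Fin n → ℝ)) [IsProbabilityMeasure ν]
    (xs : Fin N → Fin n → ℝ) (l : Fin N → ℝ) (δ : ℝ) (hδ : 0 < δ) :
    (1 : ℝ≥0∞) - ENNReal.ofReal ((N : ℝ) * (N + 1) * Real.exp (-2 * M * δ ^ 2))
      ≤ Measure.pi (fun _ : Fin M => ν)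
          {t : Fin M → (Fin n → ℝ) |
            |((1 / (N : ℝ) ^ 2) * ∑ i : Fin N, ∑ j : Fin N,
                l i * l j * (ν {s : Fin n → ℝ | ∀ k, max (xs i k) (xs j k) ≤ s k}).toReal)
              - ((1 / (N : ℝ) ^ 2) * ∑ i : Fin N, ∑ j : Fin N,
                l i * l j * ((1 / (M : ℝ)) * ∑ q : Fin M,
                  (if ∀ k, max (xs i k) (xs j k) ≤ t q k then (1:ℝ) else 0)))|
            ≤ δ * ⨆ i : Fin N, ⨆ j : Fin N, |l i * l j|} := by
  haveI : Nonempty (Fin N) := ⟨⟨0, hN⟩⟩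
  set S : Fin N → Fin N → Set (Fin n → ℝ) :=
    fun i j => {s : Fin n → ℝ | ∀ k, max (xs i k) (xs j k) ≤ s k} with hSdef
  have hSmeas : ∀ i j, MeasurableSet (S i j) := by
    intro i j
    have : S i j = ⋂ k, {s : Fin n → ℝ | max (xs i k) (xs j k) ≤ s k} := by
      ext s; simp [hSdef, Set.mem_iInter]
    rw [this]
    exact MeasurableSet.iInter fun k =>
      measurableSet_le measurable_const (measurable_pi_apply k)
  have hSsymm : ∀ i j, S i j = S j i := by
    intro i j; ext s
    simp only [hSdef, Set.mem_setOf_eq, max_le_iff]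
    constructor <;> intro h k <;> exact ⟨(h k).2, (h k).1⟩
  set p : Fin N → Fin N → ℝ := fun i j => (ν (S i j)).toReal with hpdef
  set Bd : Fin N → Fin N → Set (Fin M → (Fin n → ℝ)) := fun i j =>
    {t : Fin M → (Fin n → ℝ) | δ < |p i j -
      (1 / (M:ℝ)) * ∑ q : Fin M, (S i j).indicator (fun _ => (1:ℝ)) (t q)|} with hBddef
  have hBdmeas : ∀ i j, MeasurableSet (Bd i j) := by
    intro i j
    have hf : Measurable (fun t : Fin M → (Fin n → ℝ) => |p i j -
        (1 / (M:ℝ)) * ∑ q : Fin M, (S i j).indicator (fun _ => (1:ℝ)) (t q)|) := by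
      apply Measurable.abs
      apply Measurable.sub measurable_const
      apply Measurable.const_mul
      exact Finset.measurable_sum _ fun q _ =>
        (measurable_const.indicator (hSmeas i j)).comp (measurable_pi_apply q)
    exact measurableSet_lt measurable_const hf
  set Bad : Set (Fin M → (Fin n → ℝ)) := ⋃ j : Fin N, ⋃ i : Fin N, ⋃ (_ : i ≤ j), Bd i j
    with hBaddef
  have hBadmeas : MeasurableSet Bad :=
    MeasurableSet.iUnion fun j => MeasurableSet.iUnion fun i =>
      MeasurableSet.iUnion fun _ => hBdmeas i j
  -- union bound
  have hBadBound : Measure.pi (fun _ : Fin M => ν) Bad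
      ≤ ENNReal.ofReal ((N : ℝ) * (N + 1) * Real.exp (-2 * M * δ ^ 2)) := by
    have step1 : Measure.pi (fun _ : Fin M => ν) Bad
        ≤ ∑ j : Fin N, ∑ i : Fin N,
            (if i ≤ j then ENNReal.ofReal (2 * Real.exp (-2 * M * δ ^ 2)) else 0) := by
      refine le_trans (measure_iUnion_fintype_le _ _) (Finset.sum_le_sum fun j _ => ?_)
      refine le_trans (measure_iUnion_fintype_le _ _) (Finset.sum_le_sum fun i _ => ?_)
      by_cases h : i ≤ j
      · simp only [h, if_true, Set.iUnion_true]
        exact hoeff_two_side ν M hM (S i j) (hSmeas i j) δ hδ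
      · simp [h]
    refine le_trans step1 ?_
    have step2 : ∀ j : Fin N, ∑ i : Fin N,
        (if i ≤ j then ENNReal.ofReal (2 * Real.exp (-2 * M * δ ^ 2)) else 0)
        = ((j:ℕ) + 1) * ENNReal.ofReal (2 * Real.exp (-2 * M * δ ^ 2)) := by
      intro j
      rw [← Finset.sum_filter]
      rw [Finset.sum_const]
      have : Finset.filter (fun i : Fin N => i ≤ j) Finset.univ = Finset.Iic j := by
        ext i; simp
      rw [this, Fin.card_Iic, nsmul_eq_mul]
      push_cast
      ring
    rw [Finset.sum_congr rfl fun j _ => step2 j, ← Finset.sum_mul]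
    have hcast : (∑ j : Fin N, (((j:ℕ) : ℝ≥0∞) + 1))
        = (((∑ j : Fin N, ((j:ℕ) + 1)) : ℕ) : ℝ≥0∞) := by
      push_cast; rfl
    rw [hcast, ← ENNReal.ofReal_natCast, ← ENNReal.ofReal_mul (by positivity)]
    apply ENNReal.ofReal_le_ofReal
    have hg : ((∑ j : Fin N, ((j:ℕ) + 1) : ℕ) : ℝ) * 2 = (N : ℝ) * (N + 1) := by
      exact_mod_cast congrArg (Nat.cast : ℕ → ℝ) (gauss_fin N)
    nlinarith [Real.exp_pos (-2 * (M:ℝ) * δ ^ 2)]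
  -- good event inclusion
  have hind : ∀ (i j : Fin N) (y : Fin n → ℝ),
      (if ∀ k, max (xs i k) (xs j k) ≤ y k then (1:ℝ) else 0)
      = (S i j).indicator (fun _ => (1:ℝ)) y := by
    intro i j y
    by_cases h : ∀ k, max (xs i k) (xs j k) ≤ y k
    · rw [if_pos h, Set.indicator_of_mem (show y ∈ S i j from h)]
    · rw [if_neg h, Set.indicator_of_notMem (show y ∉ S i j from h)]
  have hcompl : Badᶜ ⊆ {t : Fin M → (Fin n → ℝ) |
      |((1 / (N : ℝ) ^ 2) * ∑ i : Fin N, ∑ j : Fin N,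
          l i * l j * (ν {s : Fin n → ℝ | ∀ k, max (xs i k) (xs j k) ≤ s k}).toReal)
        - ((1 / (N : ℝ) ^ 2) * ∑ i : Fin N, ∑ j : Fin N,
          l i * l j * ((1 / (M : ℝ)) * ∑ q : Fin M,
            (if ∀ k, max (xs i k) (xs j k) ≤ t q k then (1:ℝ) else 0)))|
      ≤ δ * ⨆ i : Fin N, ⨆ j : Fin N, |l i * l j|} := by
    intro t ht
    simp only [hBaddef, Set.compl_iUnion, Set.mem_iInter, Set.mem_compl_iff, hBddef,
      Set.mem_setOf_eq, not_lt] at ht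
    set sup : ℝ := ⨆ i : Fin N, ⨆ j : Fin N, |l i * l j| with hsup
    set av : Fin N → Fin N → ℝ := fun i j =>
      (1 / (M:ℝ)) * ∑ q : Fin M, (S i j).indicator (fun _ => (1:ℝ)) (t q) with havdef
    have hall : ∀ i j, |p i j - av i j| ≤ δ := by
      intro i j
      rcases le_total i j with h | h
      · exact ht j i h
      · have := ht i j h
        have h1 : p i j = p j i := by rw [hpdef]; simp only; rw [hSsymm]
        have h2 : av i j = av j i := by rw [havdef]; simp only; rw [hSsymm]
        rw [h1, h2]; exact this
    have hsupnn : ∀ i j, |l i * l j| ≤ sup := by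
      intro i j
      calc |l i * l j| ≤ ⨆ j' : Fin N, |l i * l j'| :=
            le_ciSup (f := fun j' : Fin N => |l i * l j'|)
              (Set.Finite.bddAbove (Set.finite_range _)) j
        _ ≤ sup := le_ciSup (f := fun i' : Fin N => ⨆ j' : Fin N, |l i' * l j'|)
            (Set.Finite.bddAbove (Set.finite_range _)) i
    have hsup0 : 0 ≤ sup := le_trans (abs_nonneg _) (hsupnn ⟨0, hN⟩ ⟨0, hN⟩)
    simp only [Set.mem_setOf_eq]
    have hrw : ((1 / (N : ℝ) ^ 2) * ∑ i : Fin N, ∑ j : Fin N,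
          l i * l j * (ν {s : Fin n → ℝ | ∀ k, max (xs i k) (xs j k) ≤ s k}).toReal)
        - ((1 / (N : ℝ) ^ 2) * ∑ i : Fin N, ∑ j : Fin N,
          l i * l j * ((1 / (M : ℝ)) * ∑ q : Fin M,
            (if ∀ k, max (xs i k) (xs j k) ≤ t q k then (1:ℝ) else 0)))
        = (1 / (N : ℝ) ^ 2) * ∑ i : Fin N, ∑ j : Fin N, l i * l j * (p i j - av i j) := by
      rw [← mul_sub, ← Finset.sum_sub_distrib]
      congr 1
      apply Finset.sum_congr rfl
      intro i _
      rw [← Finset.sum_sub_distrib]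
      apply Finset.sum_congr rfl
      intro j _
      have : (∑ q : Fin M, (if ∀ k, max (xs i k) (xs j k) ≤ t q k then (1:ℝ) else 0))
          = ∑ q : Fin M, (S i j).indicator (fun _ => (1:ℝ)) (t q) :=
        Finset.sum_congr rfl fun q _ => hind i j (t q)
      rw [this]
      ring
    rw [hrw, abs_mul]
    have hterm : ∀ i j : Fin N, |l i * l j * (p i j - av i j)| ≤ sup * δ := by
      intro i j
      rw [abs_mul]
      exact mul_le_mul (hsupnn i j) (hall i j) (abs_nonneg _) hsup0
    have hsum : |∑ i : Fin N, ∑ j : Fin N, l i * l j * (p i j - av i j)|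
        ≤ (N:ℝ) ^ 2 * (sup * δ) := by
      calc |∑ i : Fin N, ∑ j : Fin N, l i * l j * (p i j - av i j)|
          ≤ ∑ i : Fin N, |∑ j : Fin N, l i * l j * (p i j - av i j)| :=
            Finset.abs_sum_le_sum_abs _ _
        _ ≤ ∑ i : Fin N, ∑ j : Fin N, |l i * l j * (p i j - av i j)| :=
            Finset.sum_le_sum fun i _ => Finset.abs_sum_le_sum_abs _ _
        _ ≤ ∑ _i : Fin N, ∑ _j : Fin N, sup * δ :=
            Finset.sum_le_sum fun i _ => Finset.sum_le_sum fun j _ => hterm i j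
        _ = (N:ℝ) ^ 2 * (sup * δ) := by
            simp [Finset.sum_const, Finset.card_univ]; ring
    have hN2 : (0:ℝ) < (N:ℝ) ^ 2 := by positivity
    calc |1 / (N : ℝ) ^ 2| * |∑ i : Fin N, ∑ j : Fin N, l i * l j * (p i j - av i j)|
        ≤ |1 / (N : ℝ) ^ 2| * ((N:ℝ) ^ 2 * (sup * δ)) :=
          mul_le_mul_of_nonneg_left hsum (abs_nonneg _)
      _ = δ * sup := by
          rw [abs_of_pos (by positivity)]
          field_simp
  haveI : IsProbabilityMeasure (Measure.pi fun _ : Fin M => ν) := by infer_instance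
  calc (1 : ℝ≥0∞) - ENNReal.ofReal ((N : ℝ) * (N + 1) * Real.exp (-2 * M * δ ^ 2))
      ≤ 1 - Measure.pi (fun _ : Fin M => ν) Bad := tsub_le_tsub_left hBadBound 1
    _ = Measure.pi (fun _ : Fin M => ν) Badᶜ := (prob_compl_eq_one_sub hBadmeas).symm
    _ ≤ _ := measure_mono hcompl
end

section
/- Let V and K be symmetric positive semidefinite real N×N matrices and let γ > 0. Then the matrix V·K + γ·I (the matrix product of V and K plus γ times the identity) is invertible. -/
open scoped Matrix

/-- If `V` and `K` are symmetric positive semidefinite real `N×N`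
matrices and `γ > 0`, then the matrix `V * K + γ • 1` is invertible. -/
theorem VK_add_gamma_one_isUnit (N : ℕ) (V K : Matrix (Fin N) (Fin N) ℝ)
    (hV : V.PosSemidef) (hK : K.PosSemidef) (γ : ℝ) (hγ : 0 < γ) :
    IsUnit (V * K + γ • (1 : Matrix (Fin N) (Fin N) ℝ)) := by
  rw [← Matrix.mulVec_injective_iff_isUnit]
  suffices h : ∀ z, (V * K + γ • (1 : Matrix (Fin N) (Fin N) ℝ)) *ᵥ z = 0 → z = 0 by
    intro x y hxy
    have := h (x - y) (by rw [Matrix.mulVec_sub, hxy, sub_self])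
    exact sub_eq_zero.mp this
  intro z hz
  rw [Matrix.add_mulVec, Matrix.smul_mulVec, Matrix.one_mulVec,
    ← Matrix.mulVec_mulVec] at hz
  -- dot with K z
  have hdot : (K *ᵥ z) ⬝ᵥ (V *ᵥ (K *ᵥ z)) + γ * ((K *ᵥ z) ⬝ᵥ z) = 0 := by
    have := congrArg (fun w => (K *ᵥ z) ⬝ᵥ w) hz
    simpa [dotProduct_add, dotProduct_smul, smul_eq_mul] using this
  have h1 : 0 ≤ (K *ᵥ z) ⬝ᵥ (V *ᵥ (K *ᵥ z)) := by
    simpa using hV.dotProduct_mulVec_nonneg (K *ᵥ z)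
  have h2 : 0 ≤ (K *ᵥ z) ⬝ᵥ z := by
    rw [dotProduct_comm]
    simpa using hK.dotProduct_mulVec_nonneg z
  have hzKz : z ⬝ᵥ (K *ᵥ z) = 0 := by
    rw [← dotProduct_comm]
    nlinarith
  have hKz : K *ᵥ z = 0 := by
    have := (hK.dotProduct_mulVec_zero_iff z).mp (by simpa using hzKz)
    exact this
  rw [hKz, Matrix.mulVec_zero, zero_add] at hz
  have : z = 0 := by
    have := smul_eq_zero.mp hz
    rcases this with h | h
    · exact absurd h hγ.ne'
    · exact h
  exact this
end
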